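/- Fix α ≥ 1 and ε ∈ (0,1), and let B_ε(u) := α∫₀^u (|s| + ε)^{α-1} ds. Then there is c = c(α) such that for all a, b ∈ ℝ: |b - a|^{α+1} ≤ c·(B_ε(b) - B_ε(a))·(b - a). -/

import Mathlib

open MeasureTheory intervalIntegral

private lemma rpow_superadd {x y p : ℝ} (hx : 0 ≤ x) (hy : 0 ≤ y) (hp : 1 ≤ p) :
    x ^ p + y ^ p ≤ (x + y) ^ p := by
  have h := NNReal.add_rpow_le_rpow_add x.toNNReal y.toNNReal hp
  rw [← Real.toNNReal_add hx hy] at h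
  have h2 : ((x.toNNReal ^ p + y.toNNReal ^ p : NNReal) : ℝ)
      ≤ (((x + y).toNNReal ^ p : NNReal) : ℝ) := by exact_mod_cast h
  simpa [NNReal.coe_rpow, Real.coe_toNNReal, hx, hy, add_nonneg hx hy] using h2

private lemma rpow_add_le_two_rpow {x y p : ℝ} (hx : 0 ≤ x) (hy : 0 ≤ y) (hp : 1 ≤ p) :
    (x + y) ^ p ≤ 2 ^ (p - 1) * (x ^ p + y ^ p) := by
  have h := NNReal.rpow_add_le_mul_rpow_add_rpow x.toNNReal y.toNNReal hp
  rw [← Real.toNNReal_add hx hy] at h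
  have h2 : (((x + y).toNNReal ^ p : NNReal) : ℝ)
      ≤ (((2 : NNReal) ^ (p - 1) * (x.toNNReal ^ p + y.toNNReal ^ p) : NNReal) : ℝ) := by
    exact_mod_cast h
  simpa [NNReal.coe_rpow, Real.coe_toNNReal, hx, hy, add_nonneg hx hy] using h2

theorem regularized_primitive_coercivity (α : ℝ) (hα : 1 ≤ α) :
    ∃ c : ℝ, 0 < c ∧ ∀ ε : ℝ, 0 < ε → ε < 1 → ∀ a b : ℝ,
      |b - a| ^ (α + 1) ≤
        c * (((α * ∫ s in (0:ℝ)..b, (|s| + ε) ^ (α - 1)) -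
          (α * ∫ s in (0:ℝ)..a, (|s| + ε) ^ (α - 1))) * (b - a)) := by
  have hαpos : (0:ℝ) < α := lt_of_lt_of_le one_pos hα
  have hα1 : (0:ℝ) ≤ α - 1 := by linarith
  refine ⟨2 ^ (α - 1), Real.rpow_pos_of_pos two_pos _, ?_⟩
  intro ε hε _hε1
  have hc1 : (1:ℝ) ≤ 2 ^ (α - 1) := Real.one_le_rpow one_le_two hα1
  have hc0 : (0:ℝ) ≤ 2 ^ (α - 1) := by linarith
  have cont : Continuous fun s : ℝ => (|s| + ε) ^ (α - 1) :=
    Continuous.rpow_const (continuous_abs.add continuous_const) (fun x => Or.inr hα1)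
  have integ : ∀ u v : ℝ, IntervalIntegrable (fun s => (|s| + ε) ^ (α - 1)) volume u v :=
    fun u v => cont.intervalIntegrable u v
  -- FTC on the nonnegative side
  have ftc_pos : ∀ u v : ℝ, 0 ≤ u → u ≤ v →
      α * ∫ s in u..v, (|s| + ε) ^ (α - 1) = (v + ε) ^ α - (u + ε) ^ α := by
    intro u v hu huv
    have hcongr : (∫ s in u..v, (|s| + ε) ^ (α - 1)) = ∫ s in u..v, (s + ε) ^ (α - 1) := by
      apply intervalIntegral.integral_congr
      intro x hx
      rw [Set.uIcc_of_le huv] at hx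
      show (|x| + ε) ^ (α - 1) = (x + ε) ^ (α - 1)
      rw [abs_of_nonneg (le_trans hu hx.1)]
    have hderiv : ∀ x ∈ Set.uIcc u v,
        HasDerivAt (fun s : ℝ => (s + ε) ^ α / α) ((x + ε) ^ (α - 1)) x := by
      intro x _
      have h1 : HasDerivAt (fun s : ℝ => s + ε) 1 x := (hasDerivAt_id x).add_const ε
      have h3 := (h1.rpow_const (p := α) (Or.inr hα)).div_const α
      simp only [one_mul, neg_one_mul, neg_mul, neg_div, neg_neg, mul_div_cancel_left₀ _ hαpos.ne'] at h3
      exact h3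
    have contI : Continuous fun s : ℝ => (s + ε) ^ (α - 1) :=
      Continuous.rpow_const (continuous_id.add continuous_const) (fun x => Or.inr hα1)
    rw [hcongr, intervalIntegral.integral_eq_sub_of_hasDerivAt hderiv
      (contI.intervalIntegrable u v)]
    field_simp
  -- FTC on the nonpositive side
  have ftc_neg : ∀ u v : ℝ, v ≤ 0 → u ≤ v →
      α * ∫ s in u..v, (|s| + ε) ^ (α - 1) = (ε - u) ^ α - (ε - v) ^ α := by
    intro u v hv huv
    have hcongr : (∫ s in u..v, (|s| + ε) ^ (α - 1)) = ∫ s in u..v, (ε - s) ^ (α - 1) := by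
      apply intervalIntegral.integral_congr
      intro x hx
      rw [Set.uIcc_of_le huv] at hx
      show (|x| + ε) ^ (α - 1) = (ε - x) ^ (α - 1)
      rw [abs_of_nonpos (le_trans hx.2 hv)]
      ring_nf
    have hderiv : ∀ x ∈ Set.uIcc u v,
        HasDerivAt (fun s : ℝ => -((ε - s) ^ α / α)) ((ε - x) ^ (α - 1)) x := by
      intro x _
      have h1 : HasDerivAt (fun s : ℝ => ε - s) (-1) x := (hasDerivAt_id x).const_sub ε
      have h3 := ((h1.rpow_const (p := α) (Or.inr hα)).div_const α).neg
      simp only [one_mul, neg_one_mul, neg_mul, neg_div, neg_neg, mul_div_cancel_left₀ _ hαpos.ne'] at h3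
      exact h3
    have contI : Continuous fun s : ℝ => (ε - s) ^ (α - 1) :=
      Continuous.rpow_const (continuous_const.sub continuous_id) (fun x => Or.inr hα1)
    rw [hcongr, intervalIntegral.integral_eq_sub_of_hasDerivAt hderiv
      (contI.intervalIntegrable u v)]
    field_simp
    ring
  -- key inequality for a ≤ b
  have key : ∀ a b : ℝ, a ≤ b →
      (b - a) ^ α ≤ 2 ^ (α - 1) * (α * ∫ s in a..b, (|s| + ε) ^ (α - 1)) := by
    intro a b hab
    rcases le_or_gt 0 a with ha | ha
    · -- 0 ≤ a ≤ b
      have h := ftc_pos a b ha hab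
      have h2 : (b - a) ^ α + (a + ε) ^ α ≤ (b + ε) ^ α := by
        have := rpow_superadd (x := b - a) (y := a + ε) (by linarith) (by positivity) hα
        rwa [show b - a + (a + ε) = b + ε by ring] at this
      have h3 : (b - a) ^ α ≤ α * ∫ s in a..b, (|s| + ε) ^ (α - 1) := by
        rw [h]
        have : (0:ℝ) ≤ (a + ε) ^ α := Real.rpow_nonneg (by positivity) α
        linarith
      calc (b - a) ^ α ≤ α * ∫ s in a..b, (|s| + ε) ^ (α - 1) := h3
        _ ≤ 2 ^ (α - 1) * (α * ∫ s in a..b, (|s| + ε) ^ (α - 1)) := by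
            have hnn : (0:ℝ) ≤ α * ∫ s in a..b, (|s| + ε) ^ (α - 1) :=
              le_trans (Real.rpow_nonneg (by linarith) α) h3
            nlinarith
    · rcases le_or_gt b 0 with hb | hb
      · -- a ≤ b ≤ 0
        have h := ftc_neg a b hb hab
        have h2 : (b - a) ^ α + (ε - b) ^ α ≤ (ε - a) ^ α := by
          have := rpow_superadd (x := b - a) (y := ε - b) (by linarith) (by linarith) hα
          rwa [show b - a + (ε - b) = ε - a by ring] at this
        have h3 : (b - a) ^ α ≤ α * ∫ s in a..b, (|s| + ε) ^ (α - 1) := by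
          rw [h]
          have : (0:ℝ) ≤ (ε - b) ^ α := Real.rpow_nonneg (by linarith) α
          linarith
        calc (b - a) ^ α ≤ α * ∫ s in a..b, (|s| + ε) ^ (α - 1) := h3
          _ ≤ 2 ^ (α - 1) * (α * ∫ s in a..b, (|s| + ε) ^ (α - 1)) := by
              have hnn : (0:ℝ) ≤ α * ∫ s in a..b, (|s| + ε) ^ (α - 1) :=
                le_trans (Real.rpow_nonneg (by linarith) α) h3
              nlinarith
      · -- a < 0 < b
        have hsplit : (∫ s in a..b, (|s| + ε) ^ (α - 1))
            = (∫ s in a..(0:ℝ), (|s| + ε) ^ (α - 1)) + ∫ s in (0:ℝ)..b, (|s| + ε) ^ (α - 1) :=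
          (intervalIntegral.integral_add_adjacent_intervals (integ a 0) (integ 0 b)).symm
        have hA := ftc_neg a 0 le_rfl ha.le
        have hB := ftc_pos 0 b le_rfl hb.le
        have hεα : (0:ℝ) ≤ ε ^ α := Real.rpow_nonneg hε.le α
        have h1 : (-a) ^ α + ε ^ α ≤ (ε - a) ^ α := by
          have := rpow_superadd (x := -a) (y := ε) (by linarith) hε.le hα
          rwa [show -a + ε = ε - a by ring] at this
        have h2 : b ^ α + ε ^ α ≤ (b + ε) ^ α := by
          have := rpow_superadd (x := b) (y := ε) hb.le hε.le hα
          rwa [show b + ε = b + ε by ring] at this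
        have hsum : (-a) ^ α + b ^ α ≤ α * ∫ s in a..b, (|s| + ε) ^ (α - 1) := by
          rw [hsplit, mul_add, hA, hB]
          simp only [sub_zero, zero_add]
          linarith
        have hmean : (b - a) ^ α ≤ 2 ^ (α - 1) * ((-a) ^ α + b ^ α) := by
          have := rpow_add_le_two_rpow (x := -a) (y := b) (by linarith) hb.le hα
          rwa [show -a + b = b - a by ring] at this
        calc (b - a) ^ α ≤ 2 ^ (α - 1) * ((-a) ^ α + b ^ α) := hmean
          _ ≤ 2 ^ (α - 1) * (α * ∫ s in a..b, (|s| + ε) ^ (α - 1)) := by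
              exact mul_le_mul_of_nonneg_left hsum hc0
  -- assemble, for a ≤ b
  have main : ∀ a b : ℝ, a ≤ b →
      |b - a| ^ (α + 1) ≤
        2 ^ (α - 1) * (((α * ∫ s in (0:ℝ)..b, (|s| + ε) ^ (α - 1)) -
          (α * ∫ s in (0:ℝ)..a, (|s| + ε) ^ (α - 1))) * (b - a)) := by
    intro a b hab
    have hsub : (α * ∫ s in (0:ℝ)..b, (|s| + ε) ^ (α - 1)) -
        (α * ∫ s in (0:ℝ)..a, (|s| + ε) ^ (α - 1))
        = α * ∫ s in a..b, (|s| + ε) ^ (α - 1) := by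
      rw [← mul_sub, intervalIntegral.integral_interval_sub_left (integ 0 b) (integ 0 a)]
    rw [hsub]
    rcases eq_or_lt_of_le hab with rfl | hab'
    · simp [Real.zero_rpow (by positivity : α + 1 ≠ 0)]
    · have hpos : 0 < b - a := sub_pos.2 hab'
      rw [abs_of_pos hpos, Real.rpow_add hpos, Real.rpow_one]
      have := mul_le_mul_of_nonneg_right (key a b hab) hpos.le
      calc (b - a) ^ α * (b - a)
          ≤ 2 ^ (α - 1) * (α * ∫ s in a..b, (|s| + ε) ^ (α - 1)) * (b - a) := this
        _ = 2 ^ (α - 1) * ((α * ∫ s in a..b, (|s| + ε) ^ (α - 1)) * (b - a)) := by ring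
  intro a b
  rcases le_total a b with hab | hab
  · exact main a b hab
  · have h := main b a hab
    rw [abs_sub_comm b a]
    calc |a - b| ^ (α + 1)
        ≤ 2 ^ (α - 1) * (((α * ∫ s in (0:ℝ)..a, (|s| + ε) ^ (α - 1)) -
          (α * ∫ s in (0:ℝ)..b, (|s| + ε) ^ (α - 1))) * (a - b)) := h
      _ = 2 ^ (α - 1) * (((α * ∫ s in (0:ℝ)..b, (|s| + ε) ^ (α - 1)) -
          (α * ∫ s in (0:ℝ)..a, (|s| + ε) ^ (α - 1))) * (b - a)) := by ring
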